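/- With rank as above, the relation x ≼ y ↔ rank(x) ≤ rank(y) is a linear quasi-order (reflexive, transitive, total) on ℕ^ℕ that has cofinality ω₁: there is no countable subset Y ⊆ ℕ^ℕ such that every x satisfies x ≼ y for some y ∈ Y. -/

import Mathlib

open Cardinal Ordinal

/-- The set `Q_x = {q_k : x(k) = 0}` of rationals coded by `x ∈ ℕ^ℕ`,
relative to a fixed enumeration `q` of `ℚ`. -/
def Qset (q : ℕ → ℚ) (x : ℕ → ℕ) : Set ℚ := {r | ∃ k, x k = 0 ∧ q k = r}

/-- The maximal well-ordered initial segment of `Q_x`: the set of `r ∈ Q_x` whose set of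
`≤`-predecessors within `Q_x` is well-founded under `<`. -/
def maxWO (q : ℕ → ℚ) (x : ℕ → ℕ) : Set ℚ :=
  {r ∈ Qset q x | ({r' ∈ Qset q x | r' ≤ r}).WellFoundedOn (· < ·)}

/-- Two ordinals with order-isomorphic `toType`s are equal. -/
lemma toType_iso_eq {o o' : Ordinal} (e : o.ToType ≃o o'.ToType) : o = o' := by
  rw [← Ordinal.type_toType o, ← Ordinal.type_toType o']
  exact @RelIso.ordinal_type_eq _ _ _ _ isWellOrder_lt isWellOrder_lt e.toRelIsoLT

/-- Every countable ordinal is realized as a rank. -/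
lemma exists_rank (q : ℕ → ℚ) (hq : Function.Bijective q)
    (rank : (ℕ → ℕ) → Ordinal)
    (hrank : ∀ x, Nonempty ((rank x).ToType ≃o ↥(maxWO q x)))
    (ξ : Ordinal) (hξ : ξ.card ≤ ℵ₀) : ∃ x, rank x = ξ := by
  classical
  have hcnt : Countable ξ.ToType := by
    rw [← Cardinal.mk_le_aleph0_iff, Cardinal.mk_toType]; exact hξ
  obtain ⟨f⟩ := Order.embedding_from_countable_to_dense (α := ξ.ToType) (β := ℚ)
  set S : Set ℚ := Set.range f with hS
  set x : ℕ → ℕ := fun k => if q k ∈ S then 0 else 1 with hxdef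
  have hQ : Qset q x = S := by
    ext r
    constructor
    · rintro ⟨k, hk0, rfl⟩
      by_contra h
      simp only [hxdef, if_neg h] at hk0
      exact one_ne_zero hk0
    · intro hr
      obtain ⟨k, rfl⟩ := hq.2 r
      exact ⟨k, by simp [hxdef, hr], rfl⟩
  have hwf : S.WellFoundedOn (· < ·) := by
    rw [hS, Set.wellFoundedOn_range]
    have : (Function.onFun (· < ·) f) = ((· < ·) : ξ.ToType → ξ.ToType → Prop) := by
      ext a b; exact f.lt_iff_lt
    rw [this]
    exact wellFounded_lt
  have hmax : maxWO q x = S := by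
    ext r
    constructor
    · rintro ⟨h, _⟩; rwa [hQ] at h
    · intro h
      refine ⟨by rwa [hQ], ?_⟩
      exact hwf.subset (by rw [hQ]; intro a ha; exact ha.1)
  obtain ⟨e⟩ := hrank x
  refine ⟨x, toType_iso_eq (e.trans ((OrderIso.setCongr _ _ hmax).trans
    (OrderEmbedding.orderIso (f := f)).symm))⟩

/-- The relation `x ≼ y ↔ rank x ≤ rank y` is a linear quasi-order on `ℕ^ℕ` of
cofinality `ω₁`: no countable `Y ⊆ ℕ^ℕ` is `≼`-cofinal. -/
theorem rank_preorder_uncountably_cofinal (q : ℕ → ℚ) (hq : Function.Bijective q)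
    (rank : (ℕ → ℕ) → Ordinal)
    (hrank : ∀ x, Nonempty ((rank x).ToType ≃o ↥(maxWO q x))) :
    (∀ x : ℕ → ℕ, rank x ≤ rank x) ∧
    (∀ x y z : ℕ → ℕ, rank x ≤ rank y → rank y ≤ rank z → rank x ≤ rank z) ∧
    (∀ x y : ℕ → ℕ, rank x ≤ rank y ∨ rank y ≤ rank x) ∧
    ¬ ∃ Y : Set (ℕ → ℕ), Y.Countable ∧ ∀ x : ℕ → ℕ, ∃ y ∈ Y, rank x ≤ rank y := by
  refine ⟨fun x => le_rfl, fun x y z h1 h2 => h1.trans h2, fun x y => le_total _ _, ?_⟩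
  rintro ⟨Y, hYc, hYcof⟩
  have hlt : ∀ y : ℕ → ℕ, rank y < (Cardinal.aleph 1).ord := by
    intro y
    obtain ⟨e⟩ := hrank y
    rw [Cardinal.lt_ord]
    have h2 : (maxWO q y).Countable := (Set.countable_univ (α := ℚ)).mono (Set.subset_univ _)
    have h3 : Countable (rank y).ToType := Countable.of_equiv _ e.toEquiv.symm
    have h1 : (rank y).card ≤ ℵ₀ := by
      rw [← Cardinal.mk_toType, Cardinal.mk_le_aleph0_iff]; exact h3
    calc (rank y).card ≤ ℵ₀ := h1
      _ < Cardinal.aleph 1 := by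
        rw [← Cardinal.aleph_zero]; exact Cardinal.aleph_lt_aleph.2 zero_lt_one
  have := hYc.to_subtype
  set σ : Ordinal := ⨆ y : Y, rank y.1 with hσ
  have hσlt : σ < (Cardinal.aleph 1).ord :=
    (Cardinal.ord_aleph 1).symm ▸ Ordinal.iSup_lt_omega_one (f := fun y : Y => rank y.1) (fun y => (Cardinal.ord_aleph 1) ▸ hlt y.1)
  have hsucclt : σ + 1 < (Cardinal.aleph 1).ord := by
    rw [Ordinal.add_one_eq_succ]
    exact (Cardinal.isSuccLimit_ord (by simp [Cardinal.aleph0_le_aleph])).succ_lt hσlt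
  obtain ⟨x, hx⟩ := exists_rank q hq rank hrank (σ + 1) (by
    have := Cardinal.lt_ord.mp hsucclt
    rwa [← Cardinal.succ_aleph0, Order.lt_succ_iff] at this)
  obtain ⟨y, hy, hle⟩ := hYcof x
  have hylesup : rank y ≤ σ := Ordinal.le_iSup (fun y : Y => rank y.1) ⟨y, hy⟩
  rw [hx] at hle
  have : σ < σ + 1 := by rw [Ordinal.add_one_eq_succ]; exact Order.lt_succ σ
  exact absurd (hle.trans hylesup) this.not_ge
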